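/- For every natural number k, the power ω_k^{k+2} can be written as the union of k+2 sets A₀,...,A_{k+1} such that for every i < k+2, A_i is finite in the direction of the i-th axis: for every point x ∈ ω_k^{k+2}, the set of points y ∈ A_i with y_j = x_j for all j ≠ i is finite. -/

import Mathlib

open Set Cardinal

/-- A "Kuratowski decomposition" of the tuples with coordinates in `S`:
`n+1` sets covering all such tuples, the `m`-th being finite in the direction
of the `m`-th axis. -/
private def Decomp (n : ℕ) (X : Type*) (S : Set X) : Prop :=
  ∃ B : Fin (n + 1) → Set (Fin (n + 1) → X),
    (∀ z : Fin (n + 1) → X, (∀ m, z m ∈ S) → ∃ m, z ∈ B m) ∧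
    ∀ (m : Fin (n + 1)) (x : Fin (n + 1) → X),
      {z ∈ B m | ∀ m' ≠ m, z m' = x m'}.Finite

private theorem decomp_transfer {n : ℕ} {X Y : Type*} {T : Set X}
    (f : X → Y) (hf : Set.InjOn f T) (h : Decomp n Y Set.univ) :
    Decomp n X T := by
  obtain ⟨B, hcov, hfin⟩ := h
  refine ⟨fun m => {z | (∀ i, z i ∈ T) ∧ (f ∘ z) ∈ B m}, ?_, ?_⟩
  · intro z hz
    obtain ⟨m, hm⟩ := hcov (f ∘ z) (fun _ => trivial)
    exact ⟨m, hz, hm⟩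
  · intro m x
    apply Set.Finite.of_finite_image (f := fun z => f ∘ z)
    · refine ((hfin m (f ∘ x)).subset ?_)
      rintro w ⟨z, ⟨⟨hzT, hzB⟩, hz⟩, rfl⟩
      refine ⟨hzB, fun m' hm' => ?_⟩
      simp only [Function.comp_apply]
      rw [hz m' hm']
    · intro a ha b hb hab
      funext i
      exact hf (ha.1.1 i) (hb.1.1 i) (congrFun hab i)

private theorem decomp_nat : Decomp 1 ℕ Set.univ := by
  refine ⟨![{z | z 0 ≤ z 1}, {z | z 1 < z 0}], ?_, ?_⟩
  · intro z _
    rcases le_or_gt (z 0) (z 1) with h | h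
    · exact ⟨0, h⟩
    · exact ⟨1, h⟩
  · intro m x
    fin_cases m
    · apply Set.Finite.of_finite_image (f := fun z => z 0)
      · refine (Set.finite_Iic (x 1)).subset ?_
        rintro w ⟨z, ⟨hz01, hz⟩, rfl⟩
        have h1 : z 1 = x 1 := hz 1 (by decide)
        simpa [Set.mem_Iic, h1] using (h1 ▸ hz01 : z 0 ≤ x 1)
      · intro a ha b hb hab
        funext i
        fin_cases i
        · exact hab
        · show a 1 = b 1
          rw [ha.2 1 (by decide), hb.2 1 (by decide)]
    · apply Set.Finite.of_finite_image (f := fun z => z 1)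
      · refine (Set.finite_Iio (x 0)).subset ?_
        rintro w ⟨z, ⟨hz10, hz⟩, rfl⟩
        have h0 : z 0 = x 0 := hz 0 (by decide)
        simpa [Set.mem_Iio, h0] using (h0 ▸ hz10 : z 1 < x 0)
      · intro a ha b hb hab
        funext i
        fin_cases i
        · show a 0 = b 0
          rw [ha.2 0 (by decide), hb.2 0 (by decide)]
        · exact hab

private theorem decomp_step {n : ℕ} {X : Type*} [LinearOrder X]
    (h : ∀ α : X, Decomp n X (Set.Iic α)) :
    Decomp (n + 1) X Set.univ := by
  choose B hcov hfin using h
  have hmax : ∀ y : Fin (n + 2) → X, ∃ j, ∀ l, y l ≤ y j :=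
    fun y => Finite.exists_max y
  choose J hJ using hmax
  refine ⟨fun i => {y | ∃ m, (J y).succAbove m = i ∧
    (y ∘ (J y).succAbove) ∈ B (y (J y)) m}, ?_, ?_⟩
  · intro y _
    obtain ⟨m, hm⟩ := hcov (y (J y)) (y ∘ (J y).succAbove) (fun m => hJ y _)
    exact ⟨(J y).succAbove m, m, rfl, hm⟩
  · intro i x
    have hsub : {y ∈ {y | ∃ m, (J y).succAbove m = i ∧
        (y ∘ (J y).succAbove) ∈ B (y (J y)) m} | ∀ l ≠ i, y l = x l} ⊆
        ⋃ jj : Fin (n + 2), {y | (∃ m, (J y).succAbove m = i ∧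
          (y ∘ (J y).succAbove) ∈ B (y (J y)) m) ∧ (∀ l ≠ i, y l = x l) ∧ J y = jj} := by
      intro y hy
      exact Set.mem_iUnion.2 ⟨J y, hy.1, hy.2, rfl⟩
    refine Set.Finite.subset (Set.finite_iUnion fun jj => ?_) hsub
    set T : Set (Fin (n + 2) → X) := {y | (∃ m, (J y).succAbove m = i ∧
      (y ∘ (J y).succAbove) ∈ B (y (J y)) m) ∧ (∀ l ≠ i, y l = x l) ∧ J y = jj} with hT
    rcases eq_or_ne jj i with rfl | hjji
    · convert Set.finite_empty
      ext y
      simp only [hT, Set.mem_setOf_eq, Set.mem_empty_iff_false, iff_false]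
      rintro ⟨⟨m, hmi, -⟩, -, hJy⟩
      exact Fin.succAbove_ne jj m (hJy ▸ hmi)
    · rcases Set.eq_empty_or_nonempty T with hTe | ⟨y₀, hy₀⟩
      · simp [hTe]
      obtain ⟨m₀, hm₀⟩ := Fin.exists_succAbove_eq (Ne.symm hjji)
      -- every y in T restricts (along jj.succAbove) to an element of a finite set
      have key : ∀ y ∈ T, (y ∘ jj.succAbove) ∈ B (x jj) m₀ ∧
          ∀ m' ≠ m₀, (y ∘ jj.succAbove) m' = (y₀ ∘ jj.succAbove) m' := by
        intro y hy
        obtain ⟨⟨m, hmi, hmB⟩, hagree, hJy⟩ := hy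
        rw [hJy] at hmi hmB
        have hyjj : y jj = x jj := hagree jj hjji
        have hmm : m = m₀ := Fin.succAbove_right_injective (hmi.trans hm₀.symm)
        rw [hmm, hyjj] at hmB
        refine ⟨hmB, fun m' hm' => ?_⟩
        have hne : jj.succAbove m' ≠ i := by
          intro hcontra
          exact hm' (Fin.succAbove_right_injective (hcontra.trans hm₀.symm))
        obtain ⟨-, hagree₀, hJy₀⟩ := hy₀
        simp only [Function.comp_apply]
        rw [hagree _ hne, hagree₀ _ hne]
      apply Set.Finite.of_finite_image (f := fun y => y ∘ jj.succAbove)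
      · refine (hfin (x jj) m₀ (y₀ ∘ jj.succAbove)).subset ?_
        rintro w ⟨y, hy, rfl⟩
        exact (key y hy)
      · intro a ha b hb hab
        funext l
        rcases eq_or_ne l jj with rfl | hl
        · rw [ha.2.1 l hjji, hb.2.1 l hjji]
        · obtain ⟨m', hm'⟩ := Fin.exists_succAbove_eq hl
          rw [← hm']
          exact congrFun hab m'

private theorem decomp_aleph : ∀ k : ℕ, Decomp (k + 1) (Cardinal.aleph k).ord.ToType Set.univ := by
  intro k
  induction k with
  | zero =>
      have hcard : #(Cardinal.aleph ((0 : ℕ) : Ordinal)).ord.ToType ≤ ℵ₀ := by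
        rw [Cardinal.mk_toType, Cardinal.card_ord]
        simp [Cardinal.aleph_zero]
      have : Countable (Cardinal.aleph ((0 : ℕ) : Ordinal)).ord.ToType :=
        Cardinal.mk_le_aleph0_iff.mp hcard
      obtain ⟨f, hf⟩ := exists_injective_nat (Cardinal.aleph ((0 : ℕ) : Ordinal)).ord.ToType
      exact decomp_transfer (T := Set.univ) f hf.injOn decomp_nat
  | succ k ih =>
      apply decomp_step
      intro α
      have h1 : #(Set.Iic α) < Cardinal.aleph (k + 1 : ℕ) := by
        have hIio : #(Set.Iio α) < Cardinal.aleph (k + 1 : ℕ) :=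
          Cardinal.mk_Iio_ord_toType α
        have : Set.Iic α = insert α (Set.Iio α) := by
          ext z; simp [le_iff_lt_or_eq, or_comm, eq_comm]
        rw [this]
        refine lt_of_le_of_lt (Cardinal.mk_insert_le) ?_
        exact Cardinal.add_lt_of_lt (Cardinal.aleph0_le_aleph _) hIio
          (lt_of_lt_of_le Cardinal.one_lt_aleph0 (Cardinal.aleph0_le_aleph _))
      have h2 : #(Set.Iic α) ≤ Cardinal.aleph (k : ℕ) := by
        have hsucc : Cardinal.aleph ((k + 1 : ℕ) : Ordinal) =
            Order.succ (Cardinal.aleph (k : ℕ)) := by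
          rw [show (((k : ℕ) + 1 : ℕ) : Ordinal) = Order.succ (k : Ordinal) by
            push_cast; exact Ordinal.add_one_eq_succ _, Cardinal.aleph_succ]
        exact Order.lt_succ_iff.mp (h1.trans_eq hsucc)
      have h3 : #(Set.Iic α) ≤ #(Cardinal.aleph (k : ℕ)).ord.ToType := by
        rwa [Cardinal.mk_toType, Cardinal.card_ord]
      obtain ⟨e⟩ := h3
      have hne : Nonempty (Cardinal.aleph (k : ℕ)).ord.ToType := by
        rw [Ordinal.toType_nonempty_iff_ne_zero]
        simp only [ne_eq, Cardinal.ord_eq_zero]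
        exact fun hc => (Cardinal.aleph0_pos.trans_le (Cardinal.aleph0_le_aleph _)).ne' hc
      classical
      refine decomp_transfer
        (fun x => if h : x ∈ Set.Iic α then e ⟨x, h⟩ else Classical.arbitrary _) ?_ ih
      intro a ha b hb hab
      simp only [dif_pos ha, dif_pos hb] at hab
      exact Subtype.ext_iff.mp (e.injective hab)

theorem stmt_8 (k : ℕ) :
    ∃ A : Fin (k + 2) → Set (Fin (k + 2) → (Cardinal.aleph k).ord.ToType),
      (⋃ i, A i) = Set.univ ∧
      ∀ (i : Fin (k + 2)) (x : Fin (k + 2) → (Cardinal.aleph k).ord.ToType),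
        {y ∈ A i | ∀ j ≠ i, y j = x j}.Finite := by
  obtain ⟨B, hcov, hfin⟩ := decomp_aleph k
  refine ⟨B, ?_, hfin⟩
  apply Set.eq_univ_of_forall
  intro z
  obtain ⟨m, hm⟩ := hcov z (fun _ => trivial)
  exact Set.mem_iUnion.2 ⟨m, hm⟩
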